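/- Let F, Q, S ∈ Mₙ(ℝ) and let Λ ∈ M₂ₙ(ℝ) be the block matrix [[F, Q],[S, −Fᵀ]]. For t ∈ ℝ write exp(tΛ) in n×n blocks as [[Θ₁₁(t), Θ₁₂(t)],[Θ₂₁(t), Θ₂₂(t)]]. Let P₀ ∈ Mₙ(ℝ) and let I ⊆ ℝ be an open interval containing 0 on which Y(t) := Θ₂₁(t)P₀ + Θ₂₂(t) is invertible. Then P(t) := (Θ₁₁(t)P₀ + Θ₁₂(t))·Y(t)⁻¹ satisfies P(0) = P₀ and, for every t ∈ I, P is differentiable at t with P′(t) = F·P(t) + P(t)·Fᵀ + Q − P(t)·S·P(t). -/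

import Mathlib

open Matrix

set_option linter.unusedSectionVars false
set_option maxHeartbeats 1000000

section auxlinfty

attribute [local instance] Matrix.linftyOpNormedRing Matrix.linftyOpNormedAlgebra

lemma exp_entry_hasDerivAt {n : Type*} [Fintype n] [DecidableEq n]
    (Λ : Matrix n n ℝ) (E : ℝ → Matrix n n ℝ)
    (hE : ∀ s : ℝ, NormedSpace.exp (s • Λ) = E s) (t : ℝ) (i j : n) :
    HasDerivAt (fun s : ℝ => E s i j) ((Λ * E t) i j) t := by
  have h : HasDerivAt (fun s : ℝ => E s) (Λ * E t) t := by
    simp only [← hE]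
    exact hasDerivAt_exp_smul_const' (𝕂 := ℝ) Λ t
  let l : Matrix n n ℝ →ₗ[ℝ] ℝ :=
    { toFun := fun M => M i j, map_add' := fun _ _ => rfl, map_smul' := fun _ _ => rfl }
  exact (LinearMap.toContinuousLinearMap l).hasFDerivAt.comp_hasDerivAt t h

end auxlinfty

attribute [local instance] Matrix.normedAddCommGroup Matrix.normedSpace

set_option linter.unusedSectionVars false
set_option maxHeartbeats 1000000


section auxpi

variable {n : Type*} [Fintype n] [DecidableEq n]

lemma hd_of_entries {A : ℝ → Matrix n n ℝ} {A' : Matrix n n ℝ} {t : ℝ}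
    (h : ∀ i j, HasDerivAt (fun s => A s i j) (A' i j) t) : HasDerivAt A A' t :=
  hasDerivAt_pi.mpr fun i => hasDerivAt_pi.mpr fun j => h i j

lemma hd_entry_mul {A B : ℝ → Matrix n n ℝ} {A' B' : Matrix n n ℝ} {t : ℝ}
    (hA : ∀ i j, HasDerivAt (fun s => A s i j) (A' i j) t)
    (hB : ∀ i j, HasDerivAt (fun s => B s i j) (B' i j) t) :
    ∀ i j, HasDerivAt (fun s => (A s * B s) i j) ((A' * B t + A t * B') i j) t := by
  intro i j
  have hfun : (fun s => (A s * B s) i j) = fun s => ∑ l, A s i l * B s l j := by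
    funext s; rw [Matrix.mul_apply]
  rw [hfun]
  have h := HasDerivAt.fun_sum (fun l (_ : l ∈ Finset.univ) => (hA i l).mul (hB l j))
  convert h using 1
  · rfl
  · rfl
  · rfl
  simp [Matrix.add_apply, Matrix.mul_apply, Finset.sum_add_distrib]

lemma diffAt_det {A : ℝ → Matrix n n ℝ} {t : ℝ}
    (h : ∀ i j, DifferentiableAt ℝ (fun s => A s i j) t) :
    DifferentiableAt ℝ (fun s => (A s).det) t := by
  have hfun : (fun s => (A s).det) = fun s =>
      ∑ σ : Equiv.Perm n, ((Equiv.Perm.sign σ : ℤ) : ℝ) * ∏ i, A s (σ i) i := by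
    funext s; rw [Matrix.det_apply']
  rw [hfun]
  exact DifferentiableAt.fun_sum fun σ _ =>
    (DifferentiableAt.fun_finsetProd fun i _ => h (σ i) i).const_mul _

lemma diffAt_adj {A : ℝ → Matrix n n ℝ} {t : ℝ}
    (h : ∀ i j, DifferentiableAt ℝ (fun s => A s i j) t) (i j : n) :
    DifferentiableAt ℝ (fun s => (A s).adjugate i j) t := by
  have hfun : (fun s => (A s).adjugate i j)
      = fun s => ((A s).updateRow j (Pi.single i 1)).det := by
    funext s; rw [Matrix.adjugate_apply]
  rw [hfun]
  apply diffAt_det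
  intro a b
  rcases eq_or_ne a j with rfl | hne
  · simp [Matrix.updateRow_apply]
  · simp only [Matrix.updateRow_apply, if_neg hne]
    exact h a b

lemma diffAt_inv {A : ℝ → Matrix n n ℝ} {t : ℝ}
    (h : ∀ i j, DifferentiableAt ℝ (fun s => A s i j) t)
    (hu : IsUnit (A t)) (i j : n) :
    DifferentiableAt ℝ (fun s => (A s)⁻¹ i j) t := by
  have hdet : (A t).det ≠ 0 := by
    have := (Matrix.isUnit_iff_isUnit_det _).mp hu
    exact IsUnit.ne_zero (by simpa using this)
  have hfun : (fun s => (A s)⁻¹ i j) = fun s => ((A s).det)⁻¹ * (A s).adjugate i j := by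
    funext s; rw [Matrix.inv_def]; simp [Ring.inverse_eq_inv']
  rw [hfun]
  exact ((diffAt_det h).inv hdet).mul (diffAt_adj h i j)

end auxpi

theorem riccati_lft_solution (k : ℕ) (F Q S P0 : Matrix (Fin k) (Fin k) ℝ)
    (I : Set ℝ) (hIopen : IsOpen I) (hIconn : I.OrdConnected) (h0I : (0 : ℝ) ∈ I)
    (Θ11 Θ12 Θ21 Θ22 : ℝ → Matrix (Fin k) (Fin k) ℝ)
    (hΘ : ∀ t : ℝ,
      NormedSpace.exp (t • Matrix.fromBlocks F Q S (-Fᵀ)) =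
        Matrix.fromBlocks (Θ11 t) (Θ12 t) (Θ21 t) (Θ22 t))
    (hY : ∀ t ∈ I, IsUnit (Θ21 t * P0 + Θ22 t))
    (P : ℝ → Matrix (Fin k) (Fin k) ℝ)
    (hP : ∀ t : ℝ, P t = (Θ11 t * P0 + Θ12 t) * (Θ21 t * P0 + Θ22 t)⁻¹) :
    P 0 = P0 ∧
      ∀ t ∈ I, HasDerivAt P (F * P t + P t * Fᵀ + Q - P t * S * P t) t := by
  constructor
  · -- P 0 = P0
    have h1 : Matrix.fromBlocks (Θ11 0) (Θ12 0) (Θ21 0) (Θ22 0)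
        = Matrix.fromBlocks (1 : Matrix (Fin k) (Fin k) ℝ) 0 0 1 := by
      rw [← hΘ 0, zero_smul, NormedSpace.exp_zero]
      exact Matrix.fromBlocks_one.symm
    have e11 : Θ11 0 = 1 := by
      ext i j
      have h := congrFun (congrFun h1 (Sum.inl i)) (Sum.inl j)
      simpa only [Matrix.fromBlocks_apply₁₁] using h
    have e12 : Θ12 0 = 0 := by
      ext i j
      have h := congrFun (congrFun h1 (Sum.inl i)) (Sum.inr j)
      simpa only [Matrix.fromBlocks_apply₁₂] using h
    have e21 : Θ21 0 = 0 := by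
      ext i j
      have h := congrFun (congrFun h1 (Sum.inr i)) (Sum.inl j)
      simpa only [Matrix.fromBlocks_apply₂₁] using h
    have e22 : Θ22 0 = 1 := by
      ext i j
      have h := congrFun (congrFun h1 (Sum.inr i)) (Sum.inr j)
      simpa only [Matrix.fromBlocks_apply₂₂] using h
    rw [hP 0, e11, e12, e21, e22]
    simp
  · intro t ht
    -- entry derivatives of the blocks
    have h11 : ∀ i j, HasDerivAt (fun s => Θ11 s i j) ((F * Θ11 t + Q * Θ21 t) i j) t := by
      intro i j
      have h := exp_entry_hasDerivAt (Matrix.fromBlocks F Q S (-Fᵀ))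
        (fun s => Matrix.fromBlocks (Θ11 s) (Θ12 s) (Θ21 s) (Θ22 s)) hΘ t
        (Sum.inl i) (Sum.inl j)
      simpa [Matrix.fromBlocks_multiply] using h
    have h12 : ∀ i j, HasDerivAt (fun s => Θ12 s i j) ((F * Θ12 t + Q * Θ22 t) i j) t := by
      intro i j
      have h := exp_entry_hasDerivAt (Matrix.fromBlocks F Q S (-Fᵀ))
        (fun s => Matrix.fromBlocks (Θ11 s) (Θ12 s) (Θ21 s) (Θ22 s)) hΘ t
        (Sum.inl i) (Sum.inr j)
      simpa [Matrix.fromBlocks_multiply] using h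
    have h21 : ∀ i j, HasDerivAt (fun s => Θ21 s i j) ((S * Θ11 t + (-Fᵀ) * Θ21 t) i j) t := by
      intro i j
      have h := exp_entry_hasDerivAt (Matrix.fromBlocks F Q S (-Fᵀ))
        (fun s => Matrix.fromBlocks (Θ11 s) (Θ12 s) (Θ21 s) (Θ22 s)) hΘ t
        (Sum.inr i) (Sum.inl j)
      simpa [Matrix.fromBlocks_multiply] using h
    have h22 : ∀ i j, HasDerivAt (fun s => Θ22 s i j) ((S * Θ12 t + (-Fᵀ) * Θ22 t) i j) t := by
      intro i j
      have h := exp_entry_hasDerivAt (Matrix.fromBlocks F Q S (-Fᵀ))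
        (fun s => Matrix.fromBlocks (Θ11 s) (Θ12 s) (Θ21 s) (Θ22 s)) hΘ t
        (Sum.inr i) (Sum.inr j)
      simpa [Matrix.fromBlocks_multiply] using h
    set Xt : Matrix (Fin k) (Fin k) ℝ := Θ11 t * P0 + Θ12 t with hXt
    set Yt : Matrix (Fin k) (Fin k) ℝ := Θ21 t * P0 + Θ22 t with hYt
    have hP0d : ∀ (i j : Fin k),
        HasDerivAt (fun _ : ℝ => P0 i j) ((0 : Matrix (Fin k) (Fin k) ℝ) i j) t := by
      intro i j
      simpa using hasDerivAt_const t (P0 i j)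
    -- entry derivatives of X and Y
    have hXd : ∀ i j, HasDerivAt (fun s => (Θ11 s * P0 + Θ12 s) i j)
        ((F * Xt + Q * Yt) i j) t := by
      intro i j
      have hm := hd_entry_mul (t := t) h11 hP0d i j
      have hsum := hm.add (h12 i j)
      have hval : (F * Θ11 t + Q * Θ21 t) * P0 + Θ11 t * 0 + (F * Θ12 t + Q * Θ22 t)
          = F * Xt + Q * Yt := by
        rw [hXt, hYt]; noncomm_ring
      convert hsum using 1
      · rfl
      · rfl
      · rfl
      rw [← hval]
      simp [Matrix.add_apply]
    have hYd : ∀ i j, HasDerivAt (fun s => (Θ21 s * P0 + Θ22 s) i j)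
        ((S * Xt + (-Fᵀ) * Yt) i j) t := by
      intro i j
      have hm := hd_entry_mul (t := t) h21 hP0d i j
      have hsum := hm.add (h22 i j)
      have hval : (S * Θ11 t + (-Fᵀ) * Θ21 t) * P0 + Θ21 t * 0 + (S * Θ12 t + (-Fᵀ) * Θ22 t)
          = S * Xt + (-Fᵀ) * Yt := by
        rw [hXt, hYt]; noncomm_ring
      convert hsum using 1
      · rfl
      · rfl
      · rfl
      rw [← hval]
      simp [Matrix.add_apply]
    -- invertibility data
    have hu : IsUnit Yt := hY t ht
    have hdetu : IsUnit Yt.det := (Matrix.isUnit_iff_isUnit_det _).mp hu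
    set Z : Matrix (Fin k) (Fin k) ℝ := Yt⁻¹ with hZ
    have hYZ : Yt * Z = 1 := Matrix.mul_nonsing_inv _ hdetu
    have hZY : Z * Yt = 1 := Matrix.nonsing_inv_mul _ hdetu
    -- differentiability of the inverse entries
    have hZdiff : ∀ i j, DifferentiableAt ℝ (fun s => ((Θ21 s * P0 + Θ22 s)⁻¹) i j) t :=
      fun i j => diffAt_inv (fun i j => (hYd i j).differentiableAt) hu i j
    set d : Matrix (Fin k) (Fin k) ℝ :=
      Matrix.of (fun i j => deriv (fun s => ((Θ21 s * P0 + Θ22 s)⁻¹) i j) t) with hdDef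
    have hd : ∀ i j, HasDerivAt (fun s => ((Θ21 s * P0 + Θ22 s)⁻¹) i j) (d i j) t :=
      fun i j => (hZdiff i j).hasDerivAt
    -- differentiate Y * Y⁻¹ = 1
    have hprod := hd_entry_mul (t := t) hYd hd
    have hev : ∀ᶠ s in nhds t,
        (Θ21 s * P0 + Θ22 s) * (Θ21 s * P0 + Θ22 s)⁻¹ = (1 : Matrix (Fin k) (Fin k) ℝ) := by
      filter_upwards [hIopen.mem_nhds ht] with s hs
      exact Matrix.mul_nonsing_inv _ ((Matrix.isUnit_iff_isUnit_det _).mp (hY s hs))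
    have heq : (S * Xt + (-Fᵀ) * Yt) * Z + Yt * d = 0 := by
      ext i j
      have h2 : HasDerivAt (fun s => ((Θ21 s * P0 + Θ22 s) * (Θ21 s * P0 + Θ22 s)⁻¹) i j)
          (0 : ℝ) t := by
        apply HasDerivAt.congr_of_eventuallyEq
          (hasDerivAt_const t ((1 : Matrix (Fin k) (Fin k) ℝ) i j))
        filter_upwards [hev] with s hs
        rw [hs]
      have := (hprod i j).unique h2
      simpa using this
    have hdval : d = -(Z * ((S * Xt + (-Fᵀ) * Yt) * Z)) := by
      have h3 : Yt * d = -((S * Xt + (-Fᵀ) * Yt) * Z) := by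
        have := heq
        linear_combination (norm := noncomm_ring) this
      calc d = (Z * Yt) * d := by rw [hZY, one_mul]
        _ = Z * (Yt * d) := by rw [mul_assoc]
        _ = Z * -((S * Xt + (-Fᵀ) * Yt) * Z) := by rw [h3]
        _ = -(Z * ((S * Xt + (-Fᵀ) * Yt) * Z)) := by rw [mul_neg]
    -- derivative of P
    have hPd := hd_entry_mul (t := t) hXd hd
    have hPfun : P = fun s => (Θ11 s * P0 + Θ12 s) * (Θ21 s * P0 + Θ22 s)⁻¹ := funext hP
    have hPt : P t = Xt * Z := by rw [hP t]
    have key : (F * Xt + Q * Yt) * Z + Xt * d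
        = F * P t + P t * Fᵀ + Q - P t * S * P t := by
      rw [hPt, hdval]
      rw [sub_eq_add_neg]
      simp only [add_mul, neg_mul, mul_neg, mul_add, mul_assoc, neg_neg]
      rw [hYZ]
      simp only [mul_one]
      abel
    have hfinal : HasDerivAt P ((F * Xt + Q * Yt) * Z + Xt * d) t := by
      rw [hPfun]
      exact hd_of_entries hPd
    rw [key] at hfinal
    exact hfinal
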